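/- arXiv:0804.2908 — 3 statements merged into one kernel-verified Lean document; each statement's English description precedes it below -/
import Mathlib

section
/- Let T be a theory, P and Q countable sets of types, and let K(T|P) denote the class of models of T omitting every type in P. If K(T|P) is nonempty and each q ∈ Q is unsupported over K(T|P), then there exists a countable model in K(T|P) omitting every q ∈ Q. -/
open FirstOrder FirstOrder.Language Cardinal

namespace Paper

variable (L : FirstOrder.Language.{0, 0})

/-- A tuple `a` generates `M`: every element is the value of a term at `a`. -/
def Generates {M : Type*} [L.Structure M] {n : ℕ} (a : Fin n → M) : Prop :=
  ∀ y : M, ∃ t : L.Term (Fin n), t.realize a = y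

/-- A type over the language `L(c₁,…,cₙ)` in `k` free variables, represented as a set of
`L`-formulas in variables `Fin n ⊕ Fin k` (the first block playing the role of the constants). -/
def NType (n : ℕ) : Type := Σ k : ℕ, Set (L.Formula (Fin n ⊕ Fin k))

variable {L}

/-- The pair `(M, a)` realizes the type `p` (in the language with the constants interpreted
as `a`). -/
def RealizesNType {M : Type*} [L.Structure M] {n : ℕ} (a : Fin n → M) (p : NType L n) : Prop :=
  ∃ v : Fin p.1 → M, ∀ φ ∈ p.2, φ.Realize (Sum.elim a v)

variable (L) in
/-- The type `pₙ(y) = { y ≠ τ(c̄) | τ an L-term }`. -/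
def pType (n : ℕ) : NType L n :=
  ⟨1, { φ | ∃ t : L.Term (Fin n),
    φ = (Term.equal (t.relabel Sum.inl) (Term.var (Sum.inr 0))).not }⟩

/-- The complete type `p_ā(M)` of a tuple, viewed as a set of sentences of `L(c̄)`. -/
def ctype {M : Type*} [L.Structure M] {n : ℕ} (a : Fin n → M) : NType L n :=
  ⟨0, { φ | ∃ ψ : L.Formula (Fin n), ψ.Realize a ∧ φ = ψ.relabel Sum.inl }⟩

/-- A type (in the language with constants) is supported over a class `K` of models-with-tuples
if some formula, satisfiable in `K`, forces realization of the type throughout `K`. -/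
def Supported {T : L.Theory} {n : ℕ} (K : Set (Σ M : Theory.ModelType.{0, 0, 0} T, Fin n → M))
    (p : NType L n) : Prop :=
  ∃ φ : L.Formula (Fin n ⊕ Fin p.1),
    (∃ P ∈ K, ∃ v : Fin p.1 → P.1, φ.Realize (Sum.elim P.2 v)) ∧
    ∀ P ∈ K, ∀ v : Fin p.1 → P.1, φ.Realize (Sum.elim P.2 v) →
      ∀ ψ ∈ p.2, ψ.Realize (Sum.elim P.2 v)

/-- `rk`: `RankEq T n α M` means the `n`-rank of `M` is `α`. Defined by transfinite
recursion: the rank is `α ≥ 1` iff for every generating `n`-tuple `ā`, `p_ā(M)` is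
supported over the class of models (with generating tuple) of `T` omitting `pₙ` and the
complete types of all models of smaller rank. -/
def RankEq (T : L.Theory) (n : ℕ) : Ordinal.{0} → Theory.ModelType.{0, 0, 0} T → Prop :=
  Ordinal.lt_wf.fix fun α ih M =>
    1 ≤ α ∧ (∃ a : Fin n → M, Generates L a) ∧
      ∀ a : Fin n → M, Generates L a →
        Supported
          { P : Σ N : T.ModelType, Fin n → N |
            ¬ RealizesNType (L := L) P.2 (pType L n) ∧
            ∀ β : Ordinal, (h : β < α) → ∀ N : T.ModelType, ih β h N →
              ∀ b : Fin n → N, Generates L b → ¬ RealizesNType (L := L) P.2 (ctype (L := L) b) }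
          (ctype a)

/-- The class `K(T|P_{n,α})`: models of `T` with a distinguished `n`-tuple, omitting `pₙ`
(equivalently, generated by the tuple) and omitting the complete type of every `n`-generated
model of `T` of rank `< α`. -/
def Kclass (T : L.Theory) (n : ℕ) (α : Ordinal.{0}) :
    Set (Σ M : Theory.ModelType.{0, 0, 0} T, Fin n → M) :=
  { P | ¬ RealizesNType (L := L) P.2 (pType L n) ∧
    ∀ β : Ordinal, β < α → ∀ N : T.ModelType, RankEq T n β N →
      ∀ b : Fin n → N, Generates L b → ¬ RealizesNType (L := L) P.2 (ctype (L := L) b) }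

variable (L) in
/-- `n`-generated models of `T` (with countable carrier). -/
abbrev NGenModel (T : L.Theory) (n : ℕ) : Type 1 :=
  { M : Theory.ModelType.{0, 0, 0} T // ∃ a : Fin n → M, Generates L a }

instance isoSetoid {T : L.Theory} {n : ℕ} : Setoid (NGenModel L T n) where
  r M N := Nonempty (M.1 ≃[L] N.1)
  iseqv := ⟨fun M => ⟨FirstOrder.Language.Equiv.refl L M.1⟩, fun ⟨e⟩ => ⟨e.symm⟩, fun ⟨e⟩ ⟨f⟩ => ⟨FirstOrder.Language.Equiv.comp f e⟩⟩

variable (L) in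
/-- `α_n(T)`: the number of isomorphism classes of `n`-generated models of `T`. -/
def alphaCard (T : L.Theory) (n : ℕ) : Cardinal.{1} :=
  Cardinal.mk (Quotient (isoSetoid (L := L) (T := T) (n := n)))

variable (L) in
/-- `T` is `n`-consistent: it has an `n`-generated model. -/
def NConsistent (T : L.Theory) (n : ℕ) : Prop :=
  ∃ M : Theory.ModelType.{0, 0, 0} T, ∃ a : Fin n → M, Generates L a


/-! ### Universal / existential formulas, ∀∃ theories -/

variable (L) in
/-- A universal formula: universal quantifiers over a quantifier-free formula. -/
def IsUniversalFormula {α : Type} (φ : L.Formula α) : Prop :=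
  ∃ (k : ℕ) (ψ : L.BoundedFormula α k), ψ.IsQF ∧ φ = ψ.alls

variable (L) in
/-- An existential formula: existential quantifiers over a quantifier-free formula. -/
def IsExistentialFormula {α : Type} (φ : L.Formula α) : Prop :=
  ∃ (k : ℕ) (ψ : L.BoundedFormula α k), ψ.IsQF ∧ φ = ψ.exs

/-- Iterated existential quantification of the last `k` bounded variables. -/
def exsTo {α : Type} : ∀ {m k : ℕ}, L.BoundedFormula α (m + k) → L.BoundedFormula α m
  | _, 0, φ => φ
  | _, _ + 1, φ => exsTo φ.ex

variable (L) in
/-- A `∀∃`-sentence: `∀ x̄ ∃ ȳ ψ` with `ψ` quantifier-free. -/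
def IsAESentence (σ : L.Sentence) : Prop :=
  ∃ (m k : ℕ) (ψ : L.BoundedFormula Empty (m + k)), ψ.IsQF ∧ σ = (exsTo ψ).alls

variable (L) in
/-- A `∀∃`-theory. -/
def IsAETheory (T : L.Theory) : Prop := ∀ σ ∈ T, IsAESentence L σ

/-- The universal type `p_{ā,∀}(M)` of a tuple: universal sentences of `L(c̄)` true of `ā`. -/
def utype {M : Type*} [L.Structure M] {n : ℕ} (a : Fin n → M) : NType L n :=
  ⟨0, { φ | ∃ ψ : L.Formula (Fin n),
    IsUniversalFormula L ψ ∧ ψ.Realize a ∧ φ = ψ.relabel Sum.inl }⟩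

/-- A universal type is existentially supported over a class `K` if some existential formula,
satisfiable in `K`, forces its realization throughout `K`. -/
def ESupported {T : L.Theory} {n : ℕ} (K : Set (Σ M : Theory.ModelType.{0, 0, 0} T, Fin n → M))
    (p : NType L n) : Prop :=
  ∃ φ : L.Formula (Fin n ⊕ Fin p.1), IsExistentialFormula L φ ∧
    (∃ P ∈ K, ∃ v : Fin p.1 → P.1, φ.Realize (Sum.elim P.2 v)) ∧
    ∀ P ∈ K, ∀ v : Fin p.1 → P.1, φ.Realize (Sum.elim P.2 v) →
      ∀ ψ ∈ p.2, ψ.Realize (Sum.elim P.2 v)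

/-- `Rk`: the rank defined from universal types and existential supports. -/
def URankEq (T : L.Theory) (n : ℕ) : Ordinal.{0} → Theory.ModelType.{0, 0, 0} T → Prop :=
  Ordinal.lt_wf.fix fun α ih M =>
    1 ≤ α ∧ (∃ a : Fin n → M, Generates L a) ∧
      ∀ a : Fin n → M, Generates L a →
        ESupported
          { P : Σ N : Theory.ModelType.{0, 0, 0} T, Fin n → N |
            ¬ RealizesNType (L := L) P.2 (pType L n) ∧
            ∀ β : Ordinal, (h : β < α) → ∀ N : Theory.ModelType.{0, 0, 0} T, ih β h N →
              ∀ b : Fin n → N, Generates L b → ¬ RealizesNType (L := L) P.2 (utype b) }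
          (utype a)

/-- The class `K(T|Q_{n,α})` of the universal rank. -/
def UKclass (T : L.Theory) (n : ℕ) (α : Ordinal.{0}) :
    Set (Σ M : Theory.ModelType.{0, 0, 0} T, Fin n → M) :=
  { P | ¬ RealizesNType (L := L) P.2 (pType L n) ∧
    ∀ β : Ordinal, β < α → ∀ N : Theory.ModelType.{0, 0, 0} T, URankEq T n β N →
      ∀ b : Fin n → N, Generates L b → ¬ RealizesNType (L := L) P.2 (utype b) }

/-! ### Types in finitely many variables, classes of models, omitting types -/

variable (L) in
/-- A type in finitely many variables. -/
def MType : Type := Σ k : ℕ, Set (L.Formula (Fin k))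

variable (L) in
/-- A type all of whose formulas are universal. -/
def IsUniversalMType (p : MType L) : Prop := ∀ φ ∈ p.2, IsUniversalFormula L φ

/-- A model realizes a type if some tuple satisfies all of its formulas. -/
def MRealizes {T : L.Theory} (M : Theory.ModelType.{0, 0, 0} T) (p : MType L) : Prop :=
  ∃ v : Fin p.1 → M, ∀ φ ∈ p.2, φ.Realize v

/-- The class `K(T|P)` of models of `T` omitting every type in `P`. -/
def KTP (T : L.Theory) (P : Set (MType L)) : Set (Theory.ModelType.{0, 0, 0} T) :=
  { M | ∀ p ∈ P, ¬ MRealizes M p }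

/-- A type is supported over a class `K` of models of `T`. -/
def MSupported {T : L.Theory} (K : Set (Theory.ModelType.{0, 0, 0} T)) (q : MType L) : Prop :=
  ∃ φ : L.Formula (Fin q.1),
    (∃ M ∈ K, ∃ v : Fin q.1 → M, φ.Realize v) ∧
    ∀ M ∈ K, ∀ v : Fin q.1 → M, φ.Realize v → ∀ ψ ∈ q.2, ψ.Realize v

/-- A universal type is existentially supported over a class `K` of models of `T`. -/
def MESupported {T : L.Theory} (K : Set (Theory.ModelType.{0, 0, 0} T)) (q : MType L) : Prop :=
  ∃ φ : L.Formula (Fin q.1), IsExistentialFormula L φ ∧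
    (∃ M ∈ K, ∃ v : Fin q.1 → M, φ.Realize v) ∧
    ∀ M ∈ K, ∀ v : Fin q.1 → M, φ.Realize v → ∀ ψ ∈ q.2, ψ.Realize v


/-! ### Groups -/

/-- The function symbols of the language of groups. -/
inductive GroupFunc : ℕ → Type
  | mul : GroupFunc 2
  | inv : GroupFunc 1
  | one : GroupFunc 0

/-- The first-order language of groups. -/
def grpLang : FirstOrder.Language.{0, 0} := ⟨GroupFunc, fun _ => Empty⟩

/-- Any group is a `grpLang`-structure. -/
instance grpStructure (G : Type*) [Group G] : grpLang.Structure G where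
  funMap {n} f v :=
    match f with
    | .mul => v 0 * v 1
    | .inv => (v 0)⁻¹
    | .one => 1
  RelMap {n} r := r.elim

/-- The universal theory `Th_∀(H)` of a group `H`. -/
def uTheoryOf (H : Type*) [Group H] : grpLang.Theory :=
  { σ | IsUniversalFormula grpLang σ ∧ H ⊨ σ }

/-- The algebraic set `V(S)` defined by a set `S ⊆ H ∗ F(x₁,…,xₙ)` of equations. -/
def Vset {H : Type} [Group H] {n : ℕ} (S : Set (Monoid.Coprod H (FreeGroup (Fin n)))) :
    Set (Fin n → H) :=
  { g | ∀ s ∈ S, Monoid.Coprod.lift (MonoidHom.id H) (FreeGroup.lift g) s = 1 }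

/-- A group `H` is equationally noetherian if every algebraic set over `H` is defined by a
finite subsystem. -/
def EquationallyNoetherian (H : Type) [Group H] : Prop :=
  ∀ (n : ℕ) (S : Set (Monoid.Coprod H (FreeGroup (Fin n)))),
    ∃ S₀ ⊆ S, S₀.Finite ∧ Vset S = Vset S₀

/-- Bundled finitely generated `H`-limit groups (with countable-universe carrier):
finitely generated groups satisfying the universal theory of `H`. -/
def LimitGroup (H : Type) [Group H] : Type 1 :=
  { G : GrpCat.{0} // Group.FG G ∧ (G : Type) ⊨ uTheoryOf H }

instance limitGroupSetoid {H : Type} [Group H] : Setoid (LimitGroup H) where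
  r A B := Nonempty ((A.1 : Type) ≃* (B.1 : Type))
  iseqv := ⟨fun A => ⟨MulEquiv.refl _⟩, fun ⟨e⟩ => ⟨e.symm⟩, fun ⟨e⟩ ⟨f⟩ => ⟨e.trans f⟩⟩

/-- `GRank H G γ` : the group `G`, as a model of `Th_∀(H)`, has universal rank `Rk(G) = γ`
(with respect to some tuple-length). -/
def GRank (H : Type) [Group H] (G : Type) [Group G] (hmod : G ⊨ uTheoryOf H)
    (γ : Ordinal.{0}) : Prop :=
  ∃ n : ℕ, URankEq (uTheoryOf H) n γ
    (@Theory.ModelType.of grpLang (uTheoryOf H) G _ hmod One.instNonempty)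

/-- `G` is `H`-determined: some finite set `X ⊆ G \ {1}` is such that every homomorphism
from `G` to an `H`-limit group killing no element of `X` is injective. -/
def HDetermined (H : Type) [Group H] (G : Type) [Group G] : Prop :=
  ∃ X : Finset G, (1 : G) ∉ X ∧
    ∀ (L' : Type) [Group L'], Group.FG L' → (L' ⊨ uTheoryOf H) →
      ∀ f : G →* L', (∀ x ∈ X, f x ≠ 1) → Function.Injective f

end Paper

namespace OTT

attribute [local instance] Classical.propDecidable

variable {L : FirstOrder.Language.{0, 0}}

section Invariance

variable {M : Type*} [L.Structure M]

lemma term_realize_agree {t : L.Term ℕ} {v v' : ℕ → M}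
    (h : ∀ a ∈ t.varFinset, v a = v' a) : t.realize v = t.realize v' := by
  induction t with
  | var a => exact h a (by simp [Term.varFinset])
  | func f ts ih =>
    simp only [Term.realize]
    congr 1
    funext i
    exact ih i fun a ha => h a (by
      simp only [Term.varFinset, Finset.mem_biUnion, Finset.mem_univ, true_and]
      exact ⟨i, ha⟩)

lemma formula_realize_agree {n : ℕ} {φ : L.BoundedFormula ℕ n} {v v' : ℕ → M} {xs : Fin n → M}
    (h : ∀ a ∈ φ.freeVarFinset, v a = v' a) : φ.Realize v xs ↔ φ.Realize v' xs := by
  classical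
  have hsub : ↑φ.freeVarFinset ⊆ (↑φ.freeVarFinset : Set ℕ) := subset_refl _
  rw [← BoundedFormula.realize_restrictFreeVar' hsub (v := v) (xs := xs),
    ← BoundedFormula.realize_restrictFreeVar' hsub (v := v') (xs := xs)]
  have : (v ∘ (↑) : (↑φ.freeVarFinset : Set ℕ) → M) = v' ∘ (↑) := by
    funext a
    exact h a (Finset.mem_coe.1 a.2)
  rw [this]

end Invariance

lemma countable_boundedFormula [Countable L.Symbols] (α : Type) [Countable α] (n : ℕ) :
    Countable (L.BoundedFormula α n) := by
  have hs : Countable (Σ n, L.BoundedFormula α n) := by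
    rw [← Cardinal.mk_le_aleph0_iff]
    refine BoundedFormula.card_le.trans (max_le le_rfl ?_)
    have h1 : Cardinal.lift.{0} (#α) ≤ ℵ₀ := by
      simp only [Cardinal.lift_uzero]; exact Cardinal.mk_le_aleph0
    have h2 : Cardinal.lift.{0} L.card ≤ ℵ₀ := by
      rw [Language.card]
      simp only [Cardinal.lift_uzero]; exact Cardinal.mk_le_aleph0
    calc Cardinal.lift.{0} (#α) + Cardinal.lift.{0} L.card ≤ ℵ₀ + ℵ₀ := add_le_add h1 h2
      _ = ℵ₀ := Cardinal.aleph0_add_aleph0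
  exact (sigma_mk_injective (i := n)).countable

end OTT

namespace OTT

open Paper

attribute [local instance] Classical.propDecidable

variable {L : FirstOrder.Language.{0, 0}}

section Chain

variable (T : L.Theory) (P Q : Set (Paper.MType L))

/-- A formula with countably many free variables is satisfiable in the class `K(T|P)`. -/
def KSat (φ : L.Formula ℕ) : Prop :=
  ∃ M : T.ModelType, M ∈ Paper.KTP T P ∧ ∃ v : ℕ → M, φ.Realize v

/-- Plug thevariable  `m` for the unique bound variable. -/
def instVar (θ : L.BoundedFormula ℕ 1) (m : ℕ) : L.Formula ℕ :=
  θ.toFormula.relabel (Sum.elim id fun _ => m)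

lemma realize_instVar {M : Type*} [L.Structure M] {θ : L.BoundedFormula ℕ 1} {m : ℕ}
    {v : ℕ → M} : (instVar θ m).Realize v ↔ θ.Realize v (fun _ => v m) := by
  rw [instVar, Formula.realize_relabel, BoundedFormula.realize_toFormula]
  exact Iff.rfl

/-- Completion step. -/
noncomputable def stepC (φ ψ : L.Formula ℕ) : L.Formula ℕ :=
  if KSat T P (φ ⊓ ψ) then φ ⊓ ψ else φ ⊓ ψ.not

/-- Henkin witness step. -/
noncomputable def stepH (φ : L.Formula ℕ) (θ : L.BoundedFormula ℕ 1) : L.Formula ℕ :=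
  if h : ∃ m, KSat T P (φ ⊓ instVar θ m) then φ ⊓ instVar θ h.choose else φ

/-- Type-omitting step. -/
noncomputable def stepO (φ : L.Formula ℕ) (p : Paper.MType L) (t : Fin p.1 → L.Term ℕ) :
    L.Formula ℕ :=
  if h : ∃ ψ ∈ p.2, KSat T P (φ ⊓ (ψ.subst t).not) then
    φ ⊓ ((h.choose).subst t).not else φ

/-- Tasks for the construction. -/
def OTask : Type :=
  (L.Formula ℕ) ⊕ (L.BoundedFormula ℕ 1) ⊕ (Σ p : ↥(P ∪ Q), (Fin (p : Paper.MType L).1 → L.Term ℕ))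

/-- One step of the construction. -/
noncomputable def step (φ : L.Formula ℕ) : OTask P Q → L.Formula ℕ
  | Sum.inl ψ => stepC T P φ ψ
  | Sum.inr (Sum.inl θ) => stepH T P φ θ
  | Sum.inr (Sum.inr pt) => stepO T P φ (pt.1 : Paper.MType L) pt.2

/-- The chain of conditions. -/
noncomputable def chain (e : ℕ → OTask P Q) : ℕ → L.Formula ℕ
  | 0 => ⊤
  | (k + 1) => step T P Q (chain e k) (e k)

lemma step_realize {M : Type*} [L.Structure M] {φ : L.Formula ℕ} {τ : OTask P Q} {v : ℕ → M}
    (h : (step T P Q φ τ).Realize v) : φ.Realize v := by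
  rcases τ with ψ | θ | pt
  · unfold step stepC at h
    dsimp only at h
    split_ifs at h <;> exact (Formula.realize_inf.1 h).1
  · unfold step stepH at h
    dsimp only at h
    split_ifs at h
    · exact (Formula.realize_inf.1 h).1
    · exact h
  · unfold step stepO at h
    dsimp only at h
    split_ifs at h
    · exact (Formula.realize_inf.1 h).1
    · exact h

lemma chain_mono (e : ℕ → OTask P Q) {M : Type*} [L.Structure M] {v : ℕ → M} :
    ∀ {j k : ℕ}, j ≤ k → (chain T P Q e k).Realize v → (chain T P Q e j).Realize v := by
  intro j k hjk
  induction k with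
  | zero =>
    have : j = 0 := Nat.le_zero.1 hjk
    subst this; exact id
  | succ k ih =>
    intro hreal
    rcases eq_or_lt_of_le hjk with h | h
    · subst h; exact hreal
    · exact ih (Nat.lt_succ_iff.1 h) (step_realize T P Q hreal)

lemma step_ksat {φ : L.Formula ℕ} {τ : OTask P Q} (h : KSat T P φ) :
    KSat T P (step T P Q φ τ) := by
  rcases τ with ψ | θ | pt
  · unfold step stepC
    dsimp only
    split_ifs with hc
    · exact hc
    · obtain ⟨M, hM, v, hv⟩ := h
      refine ⟨M, hM, v, Formula.realize_inf.2 ⟨hv, Formula.realize_not.2 fun hψ => ?_⟩⟩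
      exact hc ⟨M, hM, v, Formula.realize_inf.2 ⟨hv, hψ⟩⟩
  · unfold step stepH
    dsimp only
    split_ifs with hc
    · exact hc.choose_spec
    · exact h
  · unfold step stepO
    dsimp only
    split_ifs with hc
    · exact hc.choose_spec.2
    · exact h

lemma chain_ksat (e : ℕ → OTask P Q) (hne : (Paper.KTP T P).Nonempty) (k : ℕ) :
    KSat T P (chain T P Q e k) := by
  induction k with
  | zero =>
    obtain ⟨M, hM⟩ := hne
    have : Nonempty (M : Type) := M.nonempty'
    exact ⟨M, hM, fun _ => Classical.arbitrary _, Formula.realize_top.2 trivial⟩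
  | succ k ih => exact step_ksat T P Q ih

end Chain

end OTT
namespace OTT

open Paper

attribute [local instance] Classical.propDecidable

variable {L : FirstOrder.Language.{0, 0}}

section Gamma

variable (T : L.Theory) (P Q : Set (Paper.MType L))

/-- The limit theory of the chain. -/
def Gamma (e : ℕ → OTask P Q) : Set (L.Formula ℕ) :=
  { ψ | ∃ k, ∀ M : T.ModelType, M ∈ Paper.KTP T P → ∀ v : ℕ → M,
      (chain T P Q e k).Realize v → ψ.Realize v }

variable {T P Q}

lemma formula_realize_agree' {M : Type*} [L.Structure M] {φ : L.Formula ℕ} {v v' : ℕ → M}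
    (h : ∀ a ∈ φ.freeVarFinset, v a = v' a) : φ.Realize v ↔ φ.Realize v' :=
  formula_realize_agree h

/-- If the current condition is satisfiable in the class, it can be extended to omit `p ∈ P`
at any term-tuple. -/
lemma exists_omit_P {p : Paper.MType L} (hp : p ∈ P) {φ : L.Formula ℕ}
    (h : KSat T P φ) (t : Fin p.1 → L.Term ℕ) :
    ∃ ψ ∈ p.2, KSat T P (φ ⊓ (ψ.subst t).not) := by
  obtain ⟨M, hM, v, hv⟩ := h
  have homit : ¬ Paper.MRealizes M p := hM p hp
  rw [Paper.MRealizes] at homit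
  push_neg at homit
  obtain ⟨ψ, hψ, hnr⟩ := homit fun i => (t i).realize v
  refine ⟨ψ, hψ, M, hM, v, Formula.realize_inf.2 ⟨hv, Formula.realize_not.2 fun hr => ?_⟩⟩
  exact hnr (BoundedFormula.realize_subst.1 hr)

/-- If the current condition is satisfiable in the class and `q` is unsupported, the condition
can be extended to omit `q` at any term-tuple. -/
lemma exists_omit_Q {q : Paper.MType L} (hq : ¬ Paper.MSupported (Paper.KTP T P) q)
    {φ : L.Formula ℕ} (h : KSat T P φ) (t : Fin q.1 → L.Term ℕ) :
    ∃ ψ ∈ q.2, KSat T P (φ ⊓ (ψ.subst t).not) := by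
  classical
  by_contra hcon
  push_neg at hcon
  apply hq
  set S : Finset ℕ :=
    insert 0 (φ.freeVarFinset ∪ Finset.univ.biUnion fun i => (t i).varFinset) with hS
  have h0 : (0 : ℕ) ∈ S := Finset.mem_insert_self _ _
  have hsubφ : φ.freeVarFinset ⊆ S := fun a ha =>
    Finset.mem_insert_of_mem (Finset.mem_union_left _ ha)
  have hsubt : ∀ i, (t i).varFinset ⊆ S := fun i a ha =>
    Finset.mem_insert_of_mem (Finset.mem_union_right _
      (Finset.mem_biUnion.2 ⟨i, Finset.mem_univ _, ha⟩))
  set g : ℕ → (Fin q.1) ⊕ {m // m ∈ S} := fun m =>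
    if hm : m ∈ S then Sum.inr ⟨m, hm⟩ else Sum.inr ⟨0, h0⟩ with hg
  set body : L.Formula ((Fin q.1) ⊕ {m // m ∈ S}) :=
    (φ.relabel g) ⊓ (BoundedFormula.iInf fun i : Fin q.1 =>
      Term.equal (Term.var (Sum.inl i)) ((t i).relabel g)) with hbody
  refine ⟨body.iExs {m // m ∈ S}, ?_, ?_⟩
  · -- satisfiable in K
    obtain ⟨M, hM, v, hv⟩ := h
    refine ⟨M, hM, fun i => (t i).realize v, ?_⟩
    rw [Formula.realize_iExs]
    refine ⟨fun s => v s.1, ?_⟩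
    rw [hbody, Formula.realize_inf]
    constructor
    · rw [Formula.realize_relabel]
      refine (formula_realize_agree' fun a ha => ?_).2 hv
      have haS : a ∈ S := hsubφ ha
      simp only [Function.comp_apply, hg, id_eq, dif_pos haS, Sum.elim_inr]
    · rw [Formula.Realize, BoundedFormula.realize_iInf]
      intro i
      have : (Term.equal (Term.var (Sum.inl i)) ((t i).relabel g) :
          L.Formula ((Fin q.1) ⊕ {m // m ∈ S})).Realize
          (fun a => Sum.elim (fun i => (t i).realize v) (fun s => v s.1) (id a)) := by
        rw [Formula.realize_equal, Term.realize_relabel]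
        simp only [Term.realize_var, id_eq, Sum.elim_inl]
        refine (term_realize_agree fun a ha => ?_).symm
        have haS : a ∈ S := hsubt i ha
        simp only [Function.comp_apply, hg, dif_pos haS, Sum.elim_inr]
      exact this
  · -- forces realization of q
    rintro M hM u hu ψ hψ
    rw [Formula.realize_iExs] at hu
    obtain ⟨w, hw⟩ := hu
    rw [hbody, Formula.realize_inf] at hw
    obtain ⟨hw1, hw2⟩ := hw
    set v' : ℕ → M := fun m => Sum.elim u w (g m) with hv'
    have hφv' : φ.Realize v' := by
      rw [Formula.realize_relabel] at hw1
      exact hw1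
    have heq : ∀ i, (t i).realize v' = u i := by
      intro i
      rw [Formula.Realize, BoundedFormula.realize_iInf] at hw2
      have h2 := (Formula.realize_equal
        (t₁ := (Term.var (Sum.inl i) : L.Term ((Fin q.1) ⊕ {m // m ∈ S})))
        (t₂ := (t i).relabel g)).1 (hw2 i)
      rw [Term.realize_relabel] at h2
      exact (by simpa using h2.symm : Term.realize (Sum.elim u w ∘ g) (t i) = u i)
    by_contra hnr
    refine hcon ψ hψ ⟨M, hM, v', Formula.realize_inf.2 ⟨hφv',
      Formula.realize_not.2 fun hr => ?_⟩⟩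
    apply hnr
    have := BoundedFormula.realize_subst.1 hr
    have harr : (fun i => (t i).realize v') = u := funext heq
    rwa [show (fun i => Term.realize v' (t i)) = u from harr] at this

end Gamma

end OTT
namespace OTT

open Paper

attribute [local instance] Classical.propDecidable

variable {L : FirstOrder.Language.{0, 0}}

section GammaProps

variable {T : L.Theory} {P Q : Set (Paper.MType L)} {e : ℕ → OTask P Q}

lemma chain_succ_eq (e : ℕ → OTask P Q) (j : ℕ) :
    chain T P Q e (j + 1) = step T P Q (chain T P Q e j) (e j) := rfl

lemma gamma_fin_sat (hne : (Paper.KTP T P).Nonempty) (Γ₀ : Finset (L.Formula ℕ))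
    (hsub : ↑Γ₀ ⊆ Gamma T P Q e) :
    ∃ M : T.ModelType, M ∈ Paper.KTP T P ∧ ∃ v : ℕ → M, ∀ ψ ∈ Γ₀, ψ.Realize v := by
  classical
  have key : ∀ Γ₁ : Finset (L.Formula ℕ), ↑Γ₁ ⊆ Gamma T P Q e →
      ∃ k, ∀ M : T.ModelType, M ∈ Paper.KTP T P → ∀ v : ℕ → M,
      (chain T P Q e k).Realize v → ∀ ψ ∈ Γ₁, ψ.Realize v := by
    intro Γ₁
    induction Γ₁ using Finset.induction with
    | empty => exact fun _ => ⟨0, fun M _ v _ ψ h => absurd h (Finset.notMem_empty ψ)⟩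
    | @insert a s ha ih =>
      intro hsub₁
      obtain ⟨k₁, hk₁⟩ := ih (fun x hx => hsub₁ (by simp [hx]))
      obtain ⟨k₂, hk₂⟩ := hsub₁ (Finset.mem_coe.2 (Finset.mem_insert_self a s))
      refine ⟨max k₁ k₂, fun M hM v hv ψ hψ => ?_⟩
      rcases Finset.mem_insert.1 hψ with rfl | hψ
      · exact hk₂ M hM v (chain_mono T P Q e (le_max_right _ _) hv)
      · exact hk₁ M hM v (chain_mono T P Q e (le_max_left _ _) hv) ψ hψ
  obtain ⟨k, hk⟩ := key Γ₀ hsub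
  obtain ⟨M, hM, v, hv⟩ := chain_ksat T P Q e hne k
  exact ⟨M, hM, v, hk M hM v hv⟩

lemma gamma_complete (he : ∀ (τ : OTask P Q) (k : ℕ), ∃ j, k ≤ j ∧ e j = τ)
    (ψ : L.Formula ℕ) : ψ ∈ Gamma T P Q e ∨ ψ.not ∈ Gamma T P Q e := by
  obtain ⟨j, -, hej⟩ := he (Sum.inl ψ) 0
  have hstep : chain T P Q e (j + 1) = stepC T P (chain T P Q e j) ψ := by
    rw [chain_succ_eq, hej]; rfl
  by_cases hc : KSat T P (chain T P Q e j ⊓ ψ)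
  · left
    refine ⟨j + 1, fun M hM v hv => ?_⟩
    rw [hstep, stepC, if_pos hc] at hv
    exact (Formula.realize_inf.1 hv).2
  · right
    refine ⟨j + 1, fun M hM v hv => ?_⟩
    rw [hstep, stepC, if_neg hc] at hv
    exact (Formula.realize_inf.1 hv).2

lemma gamma_henkin (hne : (Paper.KTP T P).Nonempty)
    (he : ∀ (τ : OTask P Q) (k : ℕ), ∃ j, k ≤ j ∧ e j = τ) {θ : L.BoundedFormula ℕ 1}
    (hθ : θ.ex ∈ Gamma T P Q e) : ∃ m, instVar θ m ∈ Gamma T P Q e := by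
  obtain ⟨k, hk⟩ := hθ
  obtain ⟨j, hjk, hej⟩ := he (Sum.inr (Sum.inl θ)) k
  have hcond : ∃ m, KSat T P (chain T P Q e j ⊓ instVar θ m) := by
    obtain ⟨M, hM, v, hv⟩ := chain_ksat T P Q e hne j
    have hex : BoundedFormula.Realize θ.ex v default := hk M hM v (chain_mono T P Q e hjk hv)
    rw [BoundedFormula.realize_ex] at hex
    obtain ⟨a, ha⟩ := hex
    obtain ⟨m, hm⟩ := Infinite.exists_notMem_finset
      ((chain T P Q e j).freeVarFinset ∪ θ.freeVarFinset)
    have hmφ : m ∉ (chain T P Q e j).freeVarFinset := fun h => hm (Finset.mem_union_left _ h)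
    have hmθ : m ∉ θ.freeVarFinset := fun h => hm (Finset.mem_union_right _ h)
    refine ⟨m, M, hM, Function.update v m a, Formula.realize_inf.2 ⟨?_, ?_⟩⟩
    · refine (formula_realize_agree' fun b hb => ?_).1 hv
      exact (Function.update_of_ne (fun hbm : b = m => hmφ (hbm ▸ hb)) a v).symm
    · rw [realize_instVar, Function.update_self]
      have h1 : θ.Realize v (fun _ => a) := by
        have hsnoc : (Fin.snoc default a : Fin 1 → (M : Type)) = fun _ => a := by
          funext i
          have hi : i = Fin.last 0 := Fin.eq_of_val_eq (by omega)
          rw [hi, Fin.snoc_last]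
        rwa [hsnoc] at ha
      exact (formula_realize_agree (fun b hb => (Function.update_of_ne
        (fun hbm : b = m => hmθ (hbm ▸ hb)) a v).symm)).1 h1
  have hstep : chain T P Q e (j + 1) = chain T P Q e j ⊓ instVar θ hcond.choose := by
    rw [chain_succ_eq, hej]
    show stepH T P _ θ = _
    rw [stepH, dif_pos hcond]
  exact ⟨hcond.choose, j + 1, fun M hM v hv => by
    rw [hstep] at hv
    exact (Formula.realize_inf.1 hv).2⟩

lemma gamma_omit (hne : (Paper.KTP T P).Nonempty)
    (he : ∀ (τ : OTask P Q) (k : ℕ), ∃ j, k ≤ j ∧ e j = τ)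
    (hQun : ∀ q ∈ Q, ¬ Paper.MSupported (Paper.KTP T P) q)
    {p : Paper.MType L} (hp : p ∈ P ∪ Q) (t : Fin p.1 → L.Term ℕ) :
    ∃ ψ ∈ p.2, (ψ.subst t).not ∈ Gamma T P Q e := by
  obtain ⟨j, -, hej⟩ := he (Sum.inr (Sum.inr ⟨⟨p, hp⟩, t⟩)) 0
  have hks := chain_ksat T P Q e hne j
  have hcond : ∃ ψ ∈ p.2, KSat T P (chain T P Q e j ⊓ (ψ.subst t).not) := by
    have hp' := hp
    rcases hp' with hp' | hp'
    · exact exists_omit_P hp' hks t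
    · exact exists_omit_Q (hQun p hp') hks t
  have hstep : chain T P Q e (j + 1)
      = chain T P Q e j ⊓ ((hcond.choose).subst t).not := by
    rw [chain_succ_eq, hej]
    show stepO T P _ p t = _
    rw [stepO, dif_pos hcond]
  exact ⟨hcond.choose, hcond.choose_spec.1, j + 1, fun M hM v hv => by
    rw [hstep] at hv
    exact (Formula.realize_inf.1 hv).2⟩

end GammaProps

end OTT
namespace OTT

open Paper

attribute [local instance] Classical.propDecidable

variable {L : FirstOrder.Language.{0, 0}}

section Enum

variable {T : L.Theory} {P Q : Set (Paper.MType L)}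

lemma otask_countable [Countable L.Symbols] (hP : P.Countable) (hQ : Q.Countable) :
    Countable (OTask P Q) := by
  haveI h1 : Countable (L.Formula ℕ) := countable_boundedFormula ℕ 0
  haveI h2 : Countable (L.BoundedFormula ℕ 1) := countable_boundedFormula ℕ 1
  haveI h3 : Countable ↥(P ∪ Q) := (hP.union hQ).to_subtype
  show Countable ((L.Formula ℕ) ⊕ (L.BoundedFormula ℕ 1) ⊕
    (Σ p : ↥(P ∪ Q), (Fin (p : Paper.MType L).1 → L.Term ℕ)))
  infer_instance

lemma exists_enum [Countable L.Symbols] (hP : P.Countable) (hQ : Q.Countable) :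
    ∃ e : ℕ → OTask P Q, ∀ (τ : OTask P Q) (k : ℕ), ∃ j, k ≤ j ∧ e j = τ := by
  haveI := otask_countable (L := L) hP hQ
  haveI : Nonempty (OTask P Q) := ⟨Sum.inl ⊤⟩
  obtain ⟨f, hf⟩ := exists_surjective_nat (OTask P Q)
  refine ⟨fun k => f (Nat.unpair k).1, fun τ k => ?_⟩
  obtain ⟨m, rfl⟩ := hf τ
  exact ⟨Nat.pair m k, Nat.right_le_pair m k, by simp⟩

end Enum

section TV

variable {n : ℕ}

lemma fun_eq_snoc_default {N : Type*} (b : N) : (fun _ => b) = Fin.snoc (default : Fin 0 → N) b := by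
  funext i
  have hi : i = Fin.last 0 := Fin.eq_of_val_eq (by omega)
  rw [hi, Fin.snoc_last]

lemma formula_realize_ex1 {N : Type*} [L.Structure N] (θ : L.BoundedFormula ℕ 1) (w : ℕ → N) :
    Formula.Realize θ.ex w ↔ ∃ b, θ.Realize w (fun _ => b) := by
  rw [Formula.Realize, BoundedFormula.realize_ex]
  constructor
  · rintro ⟨b, hb⟩
    exact ⟨b, by rwa [← fun_eq_snoc_default] at hb⟩
  · rintro ⟨b, hb⟩
    exact ⟨b, by rwa [fun_eq_snoc_default] at hb⟩

/-- The formula used in the Tarski–Vaught test, with term parameters. -/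
noncomputable def tvForm (φ : L.BoundedFormula Empty (n + 1)) (u : Fin n → L.Term ℕ) :
    L.BoundedFormula ℕ 1 :=
  BoundedFormula.relabel (id : ℕ ⊕ Fin 1 → ℕ ⊕ Fin 1)
    ((φ.toFormula).subst (Sum.elim (fun e => e.elim)
      (fun i : Fin (n + 1) => if h : (i : ℕ) < n then ((u ⟨i, h⟩).relabel Sum.inl)
        else Term.var (Sum.inr 0))))

lemma realize_tvForm {N : Type*} [L.Structure N] (φ : L.BoundedFormula Empty (n + 1))
    (u : Fin n → L.Term ℕ) (w : ℕ → N) (b : N) :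
    (tvForm φ u).Realize w (fun _ => b) ↔
      φ.Realize default (Fin.snoc (fun i => (u i).realize w) b) := by
  have key : ∀ xs0 : Fin 0 → N,
      ((φ.toFormula).subst (Sum.elim (fun e => e.elim)
        (fun i : Fin (n + 1) => if h : (i : ℕ) < n then ((u ⟨i, h⟩).relabel Sum.inl)
          else Term.var (Sum.inr 0)))).Realize (Sum.elim w (fun _ : Fin 1 => b)) xs0 ↔
      φ.Realize default (Fin.snoc (fun i => (u i).realize w) b) := by
    intro xs0
    rw [BoundedFormula.realize_subst, Subsingleton.elim xs0 (default : Fin 0 → N)]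
    refine Iff.trans (BoundedFormula.realize_toFormula φ _) ?_
    rw [iff_iff_eq]
    congr 1
    · exact Subsingleton.elim _ _
    · funext i
      refine Fin.lastCases ?_ (fun j => ?_) i
      · show (Sum.elim (fun e : Empty => e.elim)
            (fun i : Fin (n + 1) => if h : (i : ℕ) < n then ((u ⟨i, h⟩).relabel Sum.inl)
              else Term.var (Sum.inr 0)) (Sum.inr (Fin.last n))).realize
            (Sum.elim w (fun _ : Fin 1 => b)) = _
        have hnlt : ¬ ((Fin.last n : ℕ) < n) := by simp
        rw [Sum.elim_inr, dif_neg hnlt, Fin.snoc_last]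
        rfl
      · show (Sum.elim (fun e : Empty => e.elim)
            (fun i : Fin (n + 1) => if h : (i : ℕ) < n then ((u ⟨i, h⟩).relabel Sum.inl)
              else Term.var (Sum.inr 0)) (Sum.inr j.castSucc)).realize
            (Sum.elim w (fun _ : Fin 1 => b)) = _
        have hlt : ((j.castSucc : Fin (n + 1)) : ℕ) < n := by simpa using j.isLt
        rw [Sum.elim_inr, dif_pos hlt, Fin.snoc_castSucc, Term.realize_relabel]
        have hj : (⟨((j.castSucc : Fin (n + 1)) : ℕ), hlt⟩ : Fin n) = j := by
          ext; simp
        rw [hj]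
        rfl
  exact Iff.trans BoundedFormula.realize_relabel (key _)

end TV

end OTT

/-- Refined omitting types theorem: if `K(T|P)` is nonempty and every type
in the countable set `Q` is unsupported over `K(T|P)`, then some countable model in
`K(T|P)` omits every type in `Q`. -/
theorem stmt_2 (L : FirstOrder.Language.{0, 0}) [Countable L.Symbols] (T : L.Theory)
    (P Q : Set (Paper.MType L)) (hP : P.Countable) (hQ : Q.Countable)
    (hne : (Paper.KTP T P).Nonempty)
    (hQun : ∀ q ∈ Q, ¬ Paper.MSupported (Paper.KTP T P) q) :
    ∃ M ∈ Paper.KTP T P, Countable (M : Type) ∧ ∀ q ∈ Q, ¬ Paper.MRealizes M q := by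
  classical
  obtain ⟨e, he⟩ := OTT.exists_enum (L := L) hP hQ
  set Γ : Set (L.Formula ℕ) := OTT.Gamma T P Q e with hΓdef
  -- Satisfiability of the limit theory, with the variables as new constants.
  set T' : (L[[ℕ]]).Theory :=
    (L.lhomWithConstants ℕ).onTheory T ∪ Formula.equivSentence '' Γ with hT'def
  have hsat : T'.IsSatisfiable := by
    rw [Theory.isSatisfiable_iff_isFinitelySatisfiable]
    intro T0 hT0
    set Γ₀ : Finset (L.Formula ℕ) :=
      (T0.filter (fun σ => σ ∈ Formula.equivSentence '' Γ)).image
        (fun σ => Formula.equivSentence.symm σ) with hΓ₀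
    have hΓ₀sub : ↑Γ₀ ⊆ Γ := by
      intro ψ hψ
      simp only [hΓ₀, Finset.coe_image, Set.mem_image, Finset.mem_coe, Finset.mem_filter] at hψ
      obtain ⟨σ, ⟨hσT0, φ₀, hφ₀Γ, hφ₀σ⟩, rfl⟩ := hψ
      rw [← hφ₀σ, Equiv.symm_apply_apply]
      exact hφ₀Γ
    obtain ⟨M, hM, v, hv⟩ := OTT.gamma_fin_sat hne Γ₀ hΓ₀sub
    letI : (constantsOn ℕ).Structure M := constantsOn.structure v
    haveI : (M : Type) ⊨ (L.lhomWithConstants ℕ).onTheory T :=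
      (LHom.onTheory_model _ _).2 inferInstance
    haveI : (M : Type) ⊨ (↑T0 : (L[[ℕ]]).Theory) := by
      refine ⟨fun σ hσ => ?_⟩
      rcases hT0 hσ with hσ1 | hσ2
      · exact Theory.realize_sentence_of_mem _ hσ1
      · obtain ⟨ψ, hψΓ, rfl⟩ := hσ2
        rw [Formula.realize_equivSentence]
        have hmem : ψ ∈ Γ₀ := by
          rw [hΓ₀]
          refine Finset.mem_image.2 ⟨Formula.equivSentence ψ,
            Finset.mem_filter.2 ⟨hσ, ⟨ψ, hψΓ, rfl⟩⟩, Equiv.symm_apply_apply _ _⟩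
        have hre := hv ψ hmem
        have hcon : (fun a => (L.con a : M)) = v := rfl
        rwa [hcon]
    exact Theory.Model.isSatisfiable (M : Type)
  -- The canonical model.
  let N0 : T'.ModelType := hsat.some
  letI : L.Structure (N0 : Type) := (L.lhomWithConstants ℕ).reduct (N0 : Type)
  haveI : (L.lhomWithConstants ℕ).IsExpansionOn (N0 : Type) :=
    LHom.isExpansionOn_reduct _ _
  set c : ℕ → (N0 : Type) := fun a => ((L.con a : (L[[ℕ]]).Constants) : (N0 : Type)) with hcdef
  haveI hmodelT : (N0 : Type) ⊨ T := by
    have h1 : (N0 : Type) ⊨ (L.lhomWithConstants ℕ).onTheory T :=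
      N0.is_model.mono Set.subset_union_left
    exact (LHom.onTheory_model _ _).1 h1
  have hΓreal : ∀ ψ ∈ Γ, ψ.Realize c := by
    intro ψ hψ
    have h1 : (N0 : Type) ⊨ Formula.equivSentence ψ :=
      Theory.realize_sentence_of_mem T' (Set.mem_union_right _ (Set.mem_image_of_mem _ hψ))
    rwa [Formula.realize_equivSentence] at h1
  have hdecide : ∀ ψ : L.Formula ℕ, ψ.Realize c ↔ ψ ∈ Γ := by
    intro ψ
    refine ⟨fun h => ?_, fun h => hΓreal ψ h⟩
    refine (OTT.gamma_complete (T := T) he ψ).resolve_right fun hn => ?_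
    exact (Formula.realize_not.1 (hΓreal _ hn)) h
  -- The closed-term substructure.
  set S : L.Substructure (N0 : Type) := Substructure.closure L (Set.range c) with hSdef
  have hterm : ∀ x : (N0 : Type), x ∈ S → ∃ t : L.Term ℕ, t.realize c = x := by
    intro x hx
    obtain ⟨t, ht⟩ := Substructure.mem_closure_iff_exists_term.1 hx
    have hy : ∀ y : ↥(Set.range c), ∃ a, c a = ↑y := fun y => y.2
    choose r hr using hy
    refine ⟨t.relabel r, ?_⟩
    rw [Term.realize_relabel, show (c ∘ r) = (Subtype.val : ↥(Set.range c) → _) from funext hr]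
    exact ht
  -- Tarski–Vaught.
  have hElem : S.IsElementary := by
    apply Substructure.isElementary_of_exists
    intro n φ x a ha
    choose u hu using fun i => hterm (↑(x i)) (x i).2
    have hax : (fun i => (u i).realize c) = (Subtype.val ∘ x) := funext hu
    have h1 : (OTT.tvForm φ u).Realize c (fun _ => a) :=
      (OTT.realize_tvForm φ u c a).2 (by rw [hax]; exact ha)
    have h2 : Formula.Realize (OTT.tvForm φ u).ex c :=
      (OTT.formula_realize_ex1 _ _).2 ⟨a, h1⟩
    obtain ⟨m, hm⟩ := OTT.gamma_henkin hne he ((hdecide _).1 h2)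
    have h4 := (hdecide _).2 hm
    rw [OTT.realize_instVar] at h4
    have h5 := (OTT.realize_tvForm φ u c (c m)).1 h4
    rw [hax] at h5
    exact ⟨⟨c m, Substructure.subset_closure (Set.mem_range_self m)⟩, h5⟩
  set SE : L.ElementarySubstructure (N0 : Type) := ⟨S, hElem⟩ with hSEdef
  haveI hCS : Countable ↥S := by
    haveI : Countable ↥(Set.range c) := (Set.countable_range c).to_subtype
    have hcard := Substructure.lift_card_closure_le_card_term (L := L) (s := Set.range c)
    rw [Cardinal.lift_id] at hcard
    exact Cardinal.mk_le_aleph0_iff.1 (hcard.trans Cardinal.mk_le_aleph0)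
  haveI : Countable ↥SE := hCS
  haveI : ↥SE ⊨ T := inferInstance
  haveI : Nonempty ↥SE := ⟨⟨c 0, Substructure.subset_closure ⟨0, rfl⟩⟩⟩
  set Mfin : T.ModelType := Theory.ModelType.of T ↥SE with hMfin
  -- The omitting property.
  have homitall : ∀ p, p ∈ P ∪ Q → ¬ Paper.MRealizes Mfin p := by
    rintro p hp ⟨w0, hw⟩
    let w : Fin p.1 → ↥SE := w0
    choose u hu using fun i => hterm (↑(w i) : (N0 : Type)) (w i).2
    obtain ⟨ψ, hψp, hψΓ⟩ := OTT.gamma_omit hne he hQun hp u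
    have hreal := hΓreal _ hψΓ
    rw [Formula.realize_not] at hreal
    apply hreal
    have h1 : ψ.Realize ((Subtype.val ∘ w : Fin p.1 → (N0 : Type))) := by
      have h0 : ψ.Realize w := hw ψ hψp
      exact (SE.subtype.map_formula ψ w).2 h0
    exact BoundedFormula.realize_subst.mpr
      (by rw [show (fun i => (u i).realize c) = (Subtype.val ∘ w) from funext hu]; exact h1)
  refine ⟨Mfin, fun p hp => homitall p (Set.mem_union_left _ hp), ?_, fun q hq =>
    homitall q (Set.mem_union_right _ hq)⟩
  exact (inferInstance : Countable ↥SE)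
end

section
/- Let T be a theory, P a countable set of types with K(T|P) nonempty, and let T' be the set of all L-sentences true in every model of K(T|P). Then every type p ∈ P is unsupported over the class of all models of T'. -/
open FirstOrder FirstOrder.Language Cardinal

/-- If `T'` is the set of sentences true in every model of `K(T|P)`, then
every `p ∈ P` is unsupported over the class of all models of `T'`. -/
theorem stmt_3 (L : FirstOrder.Language.{0, 0}) [Countable L.Symbols] (T : L.Theory)
    (P : Set (Paper.MType L)) (hP : P.Countable) (hne : (Paper.KTP T P).Nonempty) :
    ∀ p ∈ P,
      ¬ Paper.MSupported
        (T := { σ : L.Sentence | ∀ M ∈ Paper.KTP T P, (M : Type) ⊨ σ })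
        Set.univ p := by
  intro p hp hsup
  obtain ⟨φ, ⟨M₀, -, v₀, hv₀⟩, hforce⟩ := hsup
  by_cases hsat : ∃ M ∈ Paper.KTP T P, ∃ v : Fin p.1 → M, φ.Realize v
  · obtain ⟨M, hM, v, hv⟩ := hsat
    have hMT' : (M : Type) ⊨ { σ : L.Sentence | ∀ M ∈ Paper.KTP T P, (M : Type) ⊨ σ } :=
      ⟨fun σ hσ => hσ M hM⟩
    haveI := hMT'
    let M' : Theory.ModelType { σ : L.Sentence | ∀ M ∈ Paper.KTP T P, (M : Type) ⊨ σ } :=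
      Theory.ModelType.of _ (M : Type)
    have hreal : Paper.MRealizes M p :=
      ⟨v, hforce M' (Set.mem_univ _) v hv⟩
    exact hM p hp hreal
  · push_neg at hsat
    have hσ : (Formula.iAlls (Fin p.1) (φ.not.relabel (Sum.inr : Fin p.1 → Empty ⊕ Fin p.1)))
        ∈ { σ : L.Sentence | ∀ M ∈ Paper.KTP T P, (M : Type) ⊨ σ } := by
      intro M hM
      exact Formula.realize_iAlls.2 fun i => by simpa using hsat M hM i
    have := Formula.realize_iAlls.1 (M₀.is_model.realize_of_mem _ hσ) v₀
    simp only [Formula.realize_not, Formula.realize_relabel, Sum.elim_comp_inr] at this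
    exact this hv₀
end

section
/- Let T be a theory in a countable language and M an n-generated model of T that is also m-generated. Then the n-rank of M equals the m-rank of M: rk_n(M) = rk_m(M) (including the case where both are ∞). -/
open FirstOrder FirstOrder.Language Cardinal

namespace Paper

variable {L : FirstOrder.Language.{0, 0}} {T : L.Theory}

/-- Substitution of terms into a formula, at the `Formula` level. -/
def fsubst {α β : Type} (φ : L.Formula α) (tf : α → L.Term β) : L.Formula β :=
  BoundedFormula.subst φ tf

lemma realize_fsubst {α β : Type} {M : Type*} [L.Structure M]
    {φ : L.Formula α} {tf : α → L.Term β} {v : β → M} :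
    (fsubst φ tf).Realize v ↔ φ.Realize fun a => (tf a).realize v := by
  simp only [Formula.Realize, fsubst]
  exact BoundedFormula.realize_subst

lemma formula_realize_iInf {β α : Type} {M : Type*} [L.Structure M] {s : Finset β}
    (f : β → L.Formula α) {v : α → M} :
    Formula.Realize (BoundedFormula.iInf (fun b : s => f b)) v ↔ ∀ b ∈ s, (f b).Realize v := by
  simp only [Formula.Realize]
  rw [BoundedFormula.realize_iInf]
  exact ⟨fun h b hb => h ⟨b, hb⟩, fun h b => h b.1 b.2⟩

lemma sub_type_iff {M N : Type*} [L.Structure M] [L.Structure N] {k : ℕ}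
    {b : Fin k → M} {c : Fin k → N}
    (h : ∀ ψ : L.Formula (Fin k), ψ.Realize b → ψ.Realize c) :
    ∀ ψ : L.Formula (Fin k), ψ.Realize b ↔ ψ.Realize c := fun ψ =>
  ⟨h ψ, fun hc => by
    by_contra hb
    exact (Formula.realize_not.mp (h ψ.not (Formula.realize_not.mpr hb))) hc⟩

lemma realizesNType_ctype_iff {M N : Type*} [L.Structure M] [L.Structure N] {k : ℕ}
    (c : Fin k → N) (b : Fin k → M) :
    RealizesNType c (ctype (L := L) b) ↔
      ∀ ψ : L.Formula (Fin k), ψ.Realize b → ψ.Realize c := by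
  constructor
  · rintro ⟨v, h⟩ ψ hψ
    have := h (ψ.relabel Sum.inl) ⟨ψ, hψ, rfl⟩
    rw [Formula.realize_relabel] at this
    exact this
  · intro h
    refine ⟨finZeroElim, ?_⟩
    rintro φ ⟨ψ, hψ, rfl⟩
    refine Formula.realize_relabel.mpr ?_
    exact h ψ hψ

lemma not_realizes_pType_iff {M : Type*} [L.Structure M] {n : ℕ} (a : Fin n → M) :
    ¬ RealizesNType a (pType L n) ↔ Generates L a := by
  constructor
  · intro h y
    by_contra hy
    push_neg at hy
    exact h ⟨fun _ => y, by
      rintro φ ⟨t, rfl⟩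
      refine Formula.realize_not.mpr ?_
      intro heq
      exact hy t ((Term.realize_relabel (t := t) (g := Sum.inl) (v := Sum.elim a fun _ => y)).symm.trans (Formula.realize_equal.mp heq))⟩
  · rintro h ⟨v, hv⟩
    obtain ⟨t, ht⟩ := h (v (Fin.mk 0 Nat.one_pos))
    have := hv _ ⟨t, rfl⟩
    exact Formula.realize_not.mp this (Formula.realize_equal.mpr ((Term.realize_relabel).trans ht))

lemma rankEq_iff {k : ℕ} {γ : Ordinal} {M : T.ModelType} :
    RankEq T k γ M ↔ 1 ≤ γ ∧ (∃ a : Fin k → M, Generates L a) ∧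
      ∀ a : Fin k → M, Generates L a → Supported (Kclass T k γ) (ctype (L := L) a) := by
  unfold RankEq
  rw [WellFounded.fix_eq]
  exact Iff.rfl

lemma rank_unique {k : ℕ} {β γ : Ordinal} (h : β < γ) {M : T.ModelType}
    (hβ : RankEq T k β M) (hγ : RankEq T k γ M) : False := by
  rw [rankEq_iff] at hγ
  obtain ⟨-, ⟨a, ha⟩, h3⟩ := hγ
  obtain ⟨φ, ⟨P, hP, v, hφ⟩, hforce⟩ := h3 a ha
  exact hP.2 β h M hβ a ha ⟨v, hforce P hP v hφ⟩

lemma rank_transfer {k : ℕ} {β : Ordinal} {M N : T.ModelType}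
    (b : Fin k → M) (c : Fin k → N) (hb : Generates L b) (hc : Generates L c)
    (htp : ∀ ψ : L.Formula (Fin k), ψ.Realize b ↔ ψ.Realize c)
    (h : RankEq T k β N) : RankEq T k β M := by
  rw [rankEq_iff] at h ⊢
  obtain ⟨h1, -, h3⟩ := h
  refine ⟨h1, ⟨b, hb⟩, ?_⟩
  intro a ha
  choose u hu using fun j => hb (a j)
  have hueq : (fun j => (u j).realize b) = a := funext hu
  set c' : Fin k → N := fun j => (u j).realize c with hc'
  choose v hv using fun i => ha (b i)
  have hvc : ∀ i, (v i).realize c' = c i := by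
    intro i
    have h1' : (Term.equal ((v i).subst u) (Term.var i) : L.Formula (Fin k)).Realize b := by
      rw [Formula.realize_equal, Term.realize_subst, hueq]
      exact hv i
    have h2 := (htp _).mp h1'
    rw [Formula.realize_equal, Term.realize_subst] at h2
    exact h2
  have hc'gen : Generates L c' := by
    intro y
    obtain ⟨t, ht⟩ := hc y
    refine ⟨t.subst v, ?_⟩
    rw [Term.realize_subst]
    rw [show (fun i => (v i).realize c') = c from funext hvc]
    exact ht
  have hty : ∀ ψ : L.Formula (Fin k), ψ.Realize a ↔ ψ.Realize c' := by
    intro ψ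
    have hA : ψ.Realize a ↔ (fsubst ψ u).Realize b := by
      rw [realize_fsubst, hueq]
    have hB : ψ.Realize c' ↔ (fsubst ψ u).Realize c := by
      rw [realize_fsubst, ← hc']
    rw [hA, hB]; exact htp _
  have hcty : ctype (L := L) a = ctype (L := L) c' := by
    unfold ctype
    refine congrArg _ (Set.ext fun φ => ?_)
    simp only [Set.mem_setOf_eq]
    constructor
    · rintro ⟨ψ, hr, rfl⟩; exact ⟨ψ, (hty ψ).mp hr, rfl⟩
    · rintro ⟨ψ, hr, rfl⟩; exact ⟨ψ, (hty ψ).mpr hr, rfl⟩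
  rw [hcty]
  exact h3 c' hc'gen

lemma mem_Kclass {k : ℕ} {γ : Ordinal} {Q : T.ModelType} {c : Fin k → Q}
    (hc : Generates L c) (hno : ∀ β, β < γ → ¬ RankEq T k β Q) :
    (⟨Q, c⟩ : Σ N : T.ModelType, Fin k → N) ∈ Kclass T k γ := by
  refine ⟨(not_realizes_pType_iff c).mpr hc, ?_⟩
  intro β hβ N hN b' hb' hreal
  have htp := sub_type_iff ((realizesNType_ctype_iff c b').mp hreal)
  exact hno β hβ (rank_transfer c b' hc hb' (fun ψ => (htp ψ).symm) hN)

lemma rank_forward {n m : ℕ} {γ : Ordinal}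
    (IH : ∀ β, β < γ → ∀ M' : T.ModelType,
      (∃ a : Fin n → M', Generates L a) → (∃ b : Fin m → M', Generates L b) →
      (RankEq T n β M' ↔ RankEq T m β M'))
    {M : T.ModelType} (hn : ∃ a : Fin n → M, Generates L a)
    (hm : ∃ b : Fin m → M, Generates L b)
    (hγ : RankEq T n γ M) : RankEq T m γ M := by
  have hγ' := hγ
  rw [rankEq_iff] at hγ' ⊢
  obtain ⟨h1, -, h3⟩ := hγ'
  refine ⟨h1, hm, ?_⟩
  intro b hb
  obtain ⟨a, ha⟩ := hn
  obtain ⟨φ, ⟨P₀, hP₀, v₀, hφ₀⟩, hforce⟩ := h3 a ha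
  choose t ht using fun i => ha (b i)
  choose s hs using fun j => hb (a j)
  -- `φ` holds of `a` in `M`
  have hP₀a : ∀ ψ : L.Formula (Fin n), ψ.Realize a → ψ.Realize P₀.2 :=
    (realizesNType_ctype_iff P₀.2 a).mp ⟨v₀, hforce P₀ hP₀ v₀ hφ₀⟩
  set ρ : Fin n ⊕ Fin (ctype (L := L) a).1 → Fin n :=
    Sum.elim id (fun x => x.elim0) with hρ
  have hρe : ∀ (Q : Type) (w : Fin n → Q) (v : Fin (ctype (L := L) a).1 → Q),
      w ∘ ρ = Sum.elim w v := by
    intro Q w v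
    funext x
    rcases x with j | x
    · rfl
    · exact x.elim0
  have hφa : ∀ v : Fin (ctype (L := L) a).1 → (M : Type), φ.Realize (Sum.elim a v) := by
    intro v
    by_contra hcon
    have hnot : (φ.relabel ρ).not.Realize a := by
      rw [Formula.realize_not, Formula.realize_relabel, hρe _ a v]
      exact hcon
    have := hP₀a _ hnot
    rw [Formula.realize_not, Formula.realize_relabel, hρe _ P₀.2 v₀] at this
    exact this hφ₀
  -- the supporting formula for `b`
  set σ : Fin n ⊕ Fin (ctype (L := L) a).1 → L.Term (Fin m ⊕ Fin (ctype (L := L) b).1) :=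
    Sum.elim (fun j => ((s j).relabel Sum.inl)) (fun x => x.elim0) with hσ
  set τ : Fin m → L.Term (Fin m ⊕ Fin (ctype (L := L) b).1) :=
    fun i => ((t i).subst s).relabel Sum.inl with hτ
  set ε : Fin m → L.Formula (Fin m ⊕ Fin (ctype (L := L) b).1) :=
    fun i => Term.equal (Term.var (Sum.inl i)) (τ i) with hε
  set φ' : L.Formula (Fin m ⊕ Fin (ctype (L := L) b).1) :=
    fsubst φ σ ⊓ BoundedFormula.iInf (fun i : (Finset.univ : Finset (Fin m)) => ε i) with hφ'
  have hσe : ∀ (Q : T.ModelType) (w : Fin m → Q) (v : Fin (ctype (L := L) b).1 → Q)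
      (v' : Fin (ctype (L := L) a).1 → Q),
      (fun x => (σ x).realize (Sum.elim w v)) =
        Sum.elim (fun j => (s j).realize w) v' := by
    intro Q w v v'
    funext x
    rcases x with j | x
    · simp only [hσ, Sum.elim_inl, Term.realize_relabel]
      rfl
    · exact x.elim0
  have hno : ∀ β, β < γ → ¬ RankEq T m β M := by
    intro β hβ hMβ
    exact rank_unique hβ ((IH β hβ M ⟨a, ha⟩ hm).mpr hMβ) hγ
  refine ⟨φ', ⟨⟨M, b⟩, mem_Kclass hb hno, finZeroElim, ?_⟩, ?_⟩
  · -- φ' is realized by (M, b)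
    rw [hφ', Formula.realize_inf]
    constructor
    · rw [realize_fsubst, hσe M b finZeroElim (fun x => x.elim0)]
      rw [show (fun j => (s j).realize b) = a from funext hs]
      exact hφa _
    · rw [formula_realize_iInf]
      intro i _
      rw [hε, Formula.realize_equal]
      show b i = _
      rw [hτ, Term.realize_relabel, Term.realize_subst]
      exact ((congrArg (fun w => Term.realize w (t i)) (funext hs)).trans (ht i)).symm
  · -- φ' forces the type of b
    rintro P hP v hv ψ ⟨ψ₀, hψ₀, rfl⟩
    rw [hφ', Formula.realize_inf] at hv
    obtain ⟨hv1, hv2⟩ := hv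
    have hcgen : Generates L P.2 := (not_realizes_pType_iff P.2).mp hP.1
    set d : Fin n → (P.1 : Type) := fun j => (s j).realize P.2 with hd
    have htd : ∀ i, (t i).realize d = P.2 i := by
      intro i
      rw [formula_realize_iInf] at hv2
      have := hv2 i (Finset.mem_univ i)
      rw [hε, Formula.realize_equal] at this
      rw [hτ] at this
      rw [Term.realize_relabel, Term.realize_subst] at this
      exact this.symm
    have hdgen : Generates L d := by
      intro y
      obtain ⟨u, hu⟩ := hcgen y
      refine ⟨u.subst t, ?_⟩
      rw [Term.realize_subst, show (fun i => (t i).realize d) = P.2 from funext htd]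
      exact hu
    have hnoP : ∀ β, β < γ → ¬ RankEq T n β P.1 := by
      intro β hβ hPβ
      have hPm : RankEq T m β P.1 := (IH β hβ P.1 ⟨d, hdgen⟩ ⟨P.2, hcgen⟩).mp hPβ
      exact hP.2 β hβ P.1 hPm P.2 hcgen
        ((realizesNType_ctype_iff P.2 P.2).mpr fun ψ h => h)
    have hφd : φ.Realize (Sum.elim d (fun x => x.elim0)) := by
      rw [realize_fsubst] at hv1
      rw [← hσe P.1 P.2 v (fun x => x.elim0)]
      exact hv1
    have hsub : ∀ ψ' : L.Formula (Fin n), ψ'.Realize a → ψ'.Realize d :=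
      (realizesNType_ctype_iff d a).mp
        ⟨fun x => x.elim0, hforce ⟨P.1, d⟩ (mem_Kclass hdgen hnoP) _ hφd⟩
    refine Formula.realize_relabel.mpr ?_
    show ψ₀.Realize ((Sum.elim P.2 v) ∘ Sum.inl)
    rw [show (Sum.elim P.2 v) ∘ Sum.inl = P.2 from rfl]
    have h1' : (fsubst ψ₀ t).Realize a := by
      rw [realize_fsubst, show (fun i => (t i).realize a) = b from funext ht]
      exact hψ₀
    have h2' := hsub _ h1'
    rw [realize_fsubst, show (fun i => (t i).realize d) = P.2 from funext htd] at h2'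
    exact h2'

end Paper

/-- If `M` is both `n`-generated and `m`-generated then
`rk_n(M) = rk_m(M)` (in particular, one is `∞` iff the other is). -/
theorem stmt_4 (L : FirstOrder.Language.{0, 0}) [Countable L.Symbols] (T : L.Theory)
    (n m : ℕ) (M : FirstOrder.Language.Theory.ModelType.{0, 0, 0} T)
    (hn : ∃ a : Fin n → M, Paper.Generates L a)
    (hm : ∃ b : Fin m → M, Paper.Generates L b) :
    ∀ γ : Ordinal, Paper.RankEq T n γ M ↔ Paper.RankEq T m γ M := by
  suffices H : ∀ γ : Ordinal, ∀ M : T.ModelType,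
      (∃ a : Fin n → M, Paper.Generates L a) → (∃ b : Fin m → M, Paper.Generates L b) →
      (Paper.RankEq T n γ M ↔ Paper.RankEq T m γ M) from fun γ => H γ M hn hm
  intro γ
  induction γ using Ordinal.induction with
  | h γ IH =>
    intro M hn hm
    constructor
    · exact Paper.rank_forward (fun β hβ M' h1 h2 => IH β hβ M' h1 h2) hn hm
    · exact Paper.rank_forward (fun β hβ M' h1 h2 => (IH β hβ M' h2 h1).symm) hm hn
end
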